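/- Let α, β ∈ ℝ and let f be a probability density function on (x_i, x_f) (with x_i > −∞) that is differentiable with f'(x) < 0 on (x_i, x_f), and let g = 𝔇_{α,β}[f] be its biparametric down transform. Then for every λ ∈ ℝ, ∫ g(s)^λ ds = ∫ f(x)^{1+(λ−1)α}|f'(x)|^{(1−λ)β} dx whenever one side is finite. Consequently, if λ ≠ 1, β ≠ 0 and α ≠ 2β, the Rényi entropy power of g satisfies N_λ[g] = φ_{(1−λ)β, 2−α/β}[f]^{2β−α}. -/

import Mathlib

open MeasureTheory Set Filter Topology

noncomputable section

/-- The open interval with extended-real endpoints, viewed as a set of reals. -/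
def intIoo (a b : EReal) : Set ℝ := {x : ℝ | a < (x : EReal) ∧ (x : EReal) < b}

/-- for the biparametric down transform `g = 𝔇_{α,β}[f]`,
`∫ g^λ = ∫ f^{1+(λ-1)α}|f'|^{(1-λ)β}` whenever one side is finite; consequently,
for `λ ≠ 1`, `β ≠ 0`, `α ≠ 2β`, the Rényi entropy power satisfies
`N_λ[g] = φ_{(1-λ)β, 2-α/β}[f]^{2β-α}`. -/
theorem renyi_power_of_biparametric_down_transform
    (α β lam : ℝ) (xi : ℝ) (xf : EReal) (hif : (xi : EReal) < xf)
    (f f' s g : ℝ → ℝ)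
    (hf_meas : Measurable f)
    (hf_nonneg : ∀ x, 0 ≤ f x)
    (hf_supp : ∀ x ∉ intIoo (xi : EReal) xf, f x = 0)
    (hf_int : (∫ x, f x) = 1)
    (hf' : ∀ x ∈ intIoo (xi : EReal) xf, HasDerivAt f (f' x) x)
    (hf'_neg : ∀ x ∈ intIoo (xi : EReal) xf, f' x < 0)
    (hs : ∀ x ∈ intIoo (xi : EReal) xf,
      HasDerivAt s (f x ^ (1 - α) * |f' x| ^ β) x)
    (hs_mono : StrictMonoOn s (intIoo (xi : EReal) xf))
    (hg : ∀ x ∈ intIoo (xi : EReal) xf, g (s x) = f x ^ α * |f' x| ^ (-β))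
    (hg_supp : ∀ y ∉ s '' intIoo (xi : EReal) xf, g y = 0)
    (hg_meas : Measurable g)
    (hside : IntegrableOn (fun y => g y ^ lam) (s '' intIoo (xi : EReal) xf)
      ∨ IntegrableOn
          (fun x => f x ^ (1 + (lam - 1) * α) * |f' x| ^ ((1 - lam) * β))
          (intIoo (xi : EReal) xf)) :
    (∫ y in s '' intIoo (xi : EReal) xf, g y ^ lam)
      = (∫ x in intIoo (xi : EReal) xf,
          f x ^ (1 + (lam - 1) * α) * |f' x| ^ ((1 - lam) * β))
    ∧ (lam ≠ 1 → β ≠ 0 → α ≠ 2 * β →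
        (∫ y in s '' intIoo (xi : EReal) xf, g y ^ lam) ^ ((1 : ℝ) / (1 - lam))
          = ((∫ x in intIoo (xi : EReal) xf,
              |f x ^ ((2 - α / β) - 2) * f' x| ^ ((1 - lam) * β) * f x)
              ^ ((1 : ℝ) / (((1 - lam) * β) * (2 - α / β)))) ^ (2 * β - α)) := by
  set I : Set ℝ := intIoo (xi : EReal) xf with hI
  -- basic facts about I
  have hIopen : IsOpen I := by
    have : I = (fun x : ℝ => (x : EReal)) ⁻¹' (Set.Ioo (xi : EReal) xf) := rfl
    rw [this]
    exact (isOpen_Ioo).preimage continuous_coe_real_ereal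
  have hImeas : MeasurableSet I := hIopen.measurableSet
  have hIconv : Convex ℝ I := by
    rw [convex_iff_ordConnected]
    constructor
    intro x hx y hy z hz
    exact ⟨lt_of_lt_of_le hx.1 (EReal.coe_le_coe_iff.mpr hz.1),
      lt_of_le_of_lt (EReal.coe_le_coe_iff.mpr hz.2) hy.2⟩
  -- positivity of f on I
  have hfpos : ∀ x ∈ I, 0 < f x := by
    intro x hx
    obtain ⟨y, hxy, hyxf⟩ := EReal.exists_between_coe_real hx.2
    have hyI : y ∈ I := ⟨hx.1.trans hxy, hyxf⟩
    have hIccI : Set.Icc x y ⊆ I := hIconv.ordConnected.out hx hyI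
    have hxy' : x < y := EReal.coe_lt_coe_iff.mp hxy
    have hanti : StrictAntiOn f (Set.Icc x y) := by
      apply strictAntiOn_of_deriv_neg (convex_Icc x y)
      · intro z hz
        exact (hf' z (hIccI hz)).continuousAt.continuousWithinAt
      · intro z hz
        rw [interior_Icc] at hz
        rw [(hf' z (hIccI (Set.Ioo_subset_Icc_self hz))).deriv]
        exact hf'_neg z (hIccI (Set.Ioo_subset_Icc_self hz))
    have := hanti (Set.left_mem_Icc.mpr hxy'.le) (Set.right_mem_Icc.mpr hxy'.le) hxy'
    exact lt_of_le_of_lt (hf_nonneg y) this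
  have hf'pos : ∀ x ∈ I, 0 < |f' x| := fun x hx => abs_pos.mpr (hf'_neg x hx).ne
  -- change of variables
  have hchg : (∫ y in s '' I, g y ^ lam)
      = ∫ x in I, |f x ^ (1 - α) * |f' x| ^ β| • (g (s x)) ^ lam :=
    integral_image_eq_integral_abs_deriv_smul hImeas
      (fun x hx => (hs x hx).hasDerivWithinAt) hs_mono.injOn (fun y => g y ^ lam)
  -- pointwise identity for the first integrand
  have hpt : ∀ x ∈ I, |f x ^ (1 - α) * |f' x| ^ β| • (g (s x)) ^ lam
      = f x ^ (1 + (lam - 1) * α) * |f' x| ^ ((1 - lam) * β) := by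
    intro x hx
    have hfx := hfpos x hx
    have hfx' := hf'pos x hx
    rw [hg x hx, smul_eq_mul,
      abs_of_nonneg (mul_nonneg (Real.rpow_nonneg hfx.le _) (Real.rpow_nonneg hfx'.le _)),
      Real.mul_rpow (Real.rpow_nonneg hfx.le _) (Real.rpow_nonneg hfx'.le _),
      ← Real.rpow_mul hfx.le, ← Real.rpow_mul hfx'.le]
    rw [show (1 : ℝ) + (lam - 1) * α = (1 - α) + α * lam by ring,
      show (1 - lam) * β = β + (-β) * lam by ring,
      Real.rpow_add hfx, Real.rpow_add hfx']
    ring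
  have hfirst : (∫ y in s '' I, g y ^ lam)
      = ∫ x in I, f x ^ (1 + (lam - 1) * α) * |f' x| ^ ((1 - lam) * β) := by
    rw [hchg]
    exact setIntegral_congr_fun hImeas hpt
  refine ⟨hfirst, ?_⟩
  intro hlam hβ hαβ
  have h1lam : (1 : ℝ) - lam ≠ 0 := sub_ne_zero.mpr (Ne.symm hlam)
  have h2βα : (2 : ℝ) * β - α ≠ 0 := sub_ne_zero.mpr (Ne.symm hαβ)
  have h2αβ : (2 : ℝ) - α / β ≠ 0 := by
    intro h
    apply h2βα
    field_simp at h
    linarith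
  -- the second integrand coincides with the first's RHS
  have hsecond : (∫ x in I, |f x ^ ((2 - α / β) - 2) * f' x| ^ ((1 - lam) * β) * f x)
      = ∫ x in I, f x ^ (1 + (lam - 1) * α) * |f' x| ^ ((1 - lam) * β) := by
    apply setIntegral_congr_fun hImeas
    intro x hx
    dsimp only
    have hfx := hfpos x hx
    have hfx' := hf'pos x hx
    have habs : |f x ^ ((2 - α / β) - 2) * f' x|
        = f x ^ ((2 - α / β) - 2) * |f' x| := by
      rw [abs_mul, abs_of_nonneg (Real.rpow_nonneg hfx.le _)]
    rw [habs, Real.mul_rpow (Real.rpow_nonneg hfx.le _) (abs_nonneg _),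
      ← Real.rpow_mul hfx.le]
    have hexp : ((2 - α / β) - 2) * ((1 - lam) * β) = (lam - 1) * α := by
      field_simp
      ring
    rw [hexp]
    rw [show (1 : ℝ) + (lam - 1) * α = (lam - 1) * α + 1 by ring,
      Real.rpow_add hfx, Real.rpow_one]
    ring
  rw [hfirst, hsecond]
  set A : ℝ := ∫ x in I, f x ^ (1 + (lam - 1) * α) * |f' x| ^ ((1 - lam) * β) with hA
  have hAnn : 0 ≤ A := by
    apply setIntegral_nonneg hImeas
    intro x _
    exact mul_nonneg (Real.rpow_nonneg (hf_nonneg x) _) (Real.rpow_nonneg (abs_nonneg _) _)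
  rw [← Real.rpow_mul hAnn]
  congr 1
  have h' : β * 2 - α ≠ 0 := by rwa [mul_comm] at h2βα
  field_simp
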